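/- Let X ∈ B_g(n) with S = Σⱼ Xⱼ², V = ker(I - S), W = V⊥, and suppose S ≠ I. If there exist vectors w₁, …, w_g ∈ W, not all zero, with Σⱼ Xⱼwⱼ ∈ W, then X admits a nontrivial dilation in the matrix ball B_g (i.e., X is not an Arveson extreme point of B_g). -/

import Mathlib

open Matrix
open scoped ComplexOrder

section helpers
variable {m : Type*} [Fintype m]

lemma herm_shift {X : Matrix m m ℂ} (hX : X.IsHermitian) (v y : m → ℂ) :
    star (X *ᵥ v) ⬝ᵥ y = star v ⬝ᵥ (X *ᵥ y) := by
  rw [star_mulVec, hX.eq, dotProduct_mulVec]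

lemma sum_mulVec' {J : Type*} (s : Finset J) (M : J → Matrix m m ℂ) (x : m → ℂ) :
    (∑ j ∈ s, M j) *ᵥ x = ∑ j ∈ s, M j *ᵥ x :=
  map_sum (Matrix.mulVec.addMonoidHomLeft x) M s

lemma dotProduct_sum' {J : Type*} (s : Finset J) (u : m → ℂ) (f : J → m → ℂ) :
    u ⬝ᵥ (∑ j ∈ s, f j) = ∑ j ∈ s, u ⬝ᵥ f j := by
  simp only [dotProduct, Finset.sum_apply, Finset.mul_sum]
  rw [Finset.sum_comm]

end helpers

noncomputable def toE {ι : Type*} [Fintype ι] (v : ι → ℂ) : EuclideanSpace ℂ ι :=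
  (WithLp.equiv 2 (ι → ℂ)).symm v

section bridge
variable {ι : Type*} [Fintype ι]

lemma dot_eq_inner (p q : ι → ℂ) : star p ⬝ᵥ q = @inner ℂ _ _ (toE p) (toE q) :=
  by rw [dotProduct_comm]; rfl

lemma star_dot_self_eq (y : ι → ℂ) : star y ⬝ᵥ y = ((‖toE y‖ ^ 2 : ℝ) : ℂ) := by
  rw [dot_eq_inner, inner_self_eq_norm_sq_to_K]
  norm_cast

lemma toE_add (p q : ι → ℂ) : toE (p + q) = toE p + toE q := rfl

lemma toE_smul (c : ℂ) (p : ι → ℂ) : toE (c • p) = c • toE p := rfl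

lemma norm_dot_le (p q : ι → ℂ) : ‖star p ⬝ᵥ q‖ ≤ ‖toE p‖ * ‖toE q‖ := by
  rw [dot_eq_inner]; exact norm_inner_le_norm _ _

lemma expand_sq (A B : EuclideanSpace ℂ ι) (τ : ℂ) :
    ‖A + τ • B‖ ^ 2 = ‖A‖ ^ 2 + 2 * (τ * @inner ℂ _ _ A B).re + ‖τ‖ ^ 2 * ‖B‖ ^ 2 := by
  rw [norm_add_sq (𝕜 := ℂ), inner_smul_right, norm_smul]
  simp [RCLike.re_to_complex, mul_pow]

lemma toE_unit_norm (s : ℂ) : ‖toE (fun _ : Unit => s)‖ = ‖s‖ := by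
  rw [EuclideanSpace.norm_eq]
  simp only [Fintype.sum_unique]
  rw [show ‖toE (fun _ : Unit => s) default‖ = ‖s‖ from rfl]
  exact Real.sqrt_sq (norm_nonneg s)

end bridge

/-- surjectivity onto the orthocomplement of the kernel -/
lemma exists_mulVec_eq {m : Type*} [Fintype m] [DecidableEq m] {T : Matrix m m ℂ} (hT : T.IsHermitian)
    (w : m → ℂ) (h : ∀ v, T *ᵥ v = 0 → star v ⬝ᵥ w = 0) : ∃ z, T *ᵥ z = w := by
  classical
  set U : Matrix m m ℂ := (hT.eigenvectorUnitary : Matrix m m ℂ) with hU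
  refine ⟨U *ᵥ (fun i => if hT.eigenvalues i = 0 then 0
      else (star U *ᵥ w) i / (hT.eigenvalues i : ℂ)), ?_⟩
  have hUU : U * star U = 1 := (Matrix.mem_unitaryGroup_iff).mp hT.eigenvectorUnitary.2
  have hUU' : star U * U = 1 := (Matrix.mem_unitaryGroup_iff').mp hT.eigenvectorUnitary.2
  have hzero : ∀ i, hT.eigenvalues i = 0 → (star U *ᵥ w) i = 0 := by
    intro i hi
    have hker : T *ᵥ ⇑(hT.eigenvectorBasis i) = 0 := by
      rw [hT.mulVec_eigenvectorBasis, hi]; simp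
    have := h _ hker
    have heq : (star U *ᵥ w) i = star (⇑(hT.eigenvectorBasis i)) ⬝ᵥ w := by
      simp [Matrix.mulVec, dotProduct, hU, Matrix.star_apply]
    rw [heq]; exact this
  have key : T * U = U * Matrix.diagonal (RCLike.ofReal ∘ hT.eigenvalues) := by
    conv_lhs => rw [hT.spectral_theorem, Unitary.conjStarAlgAut_apply]
    rw [← hU, Matrix.mul_assoc, Matrix.mul_assoc, hUU', Matrix.mul_one]
  rw [Matrix.mulVec_mulVec, key, ← Matrix.mulVec_mulVec]
  have : (Matrix.diagonal (RCLike.ofReal ∘ hT.eigenvalues)) *ᵥ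
      (fun i => if hT.eigenvalues i = 0 then 0 else (star U *ᵥ w) i / (hT.eigenvalues i : ℂ))
      = star U *ᵥ w := by
    funext i
    simp only [Matrix.mulVec_diagonal, Function.comp_apply]
    by_cases hi : hT.eigenvalues i = 0
    · simp [hi, hzero i hi]
    · rw [if_neg hi]; field_simp [show (hT.eigenvalues i : ℂ) ≠ 0 by exact_mod_cast hi]; exact mul_comm _ _
  rw [this, Matrix.mulVec_mulVec, hUU, Matrix.one_mulVec]

lemma exists_sq_le {m : Type*} [Fintype m] [DecidableEq m] {T : Matrix m m ℂ}
    (hT : T.PosSemidef) :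
    ∃ c : ℝ, 0 ≤ c ∧ ∀ v, star (T *ᵥ v) ⬝ᵥ (T *ᵥ v) ≤ (c : ℂ) * (star v ⬝ᵥ (T *ᵥ v)) := by
  classical
  set lam := hT.1.eigenvalues with hlam
  have hlam0 : ∀ i, 0 ≤ lam i := hT.eigenvalues_nonneg
  refine ⟨∑ i, lam i, Finset.sum_nonneg fun i _ => hlam0 i, ?_⟩
  set c : ℝ := ∑ i, lam i with hc
  set U : Matrix m m ℂ := (hT.1.eigenvectorUnitary : Matrix m m ℂ) with hU
  have hUU : U * star U = 1 := (Matrix.mem_unitaryGroup_iff).mp hT.1.eigenvectorUnitary.2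
  have hUU' : star U * U = 1 := (Matrix.mem_unitaryGroup_iff').mp hT.1.eigenvectorUnitary.2
  have hpsd : Matrix.PosSemidef ((c : ℂ) • T - T * T) := by
    have hdiag : (c : ℂ) • T - T * T
        = U * Matrix.diagonal (fun i => ((c * lam i - lam i * lam i : ℝ) : ℂ)) * Uᴴ := by
      have hspec : T = U * Matrix.diagonal (RCLike.ofReal ∘ lam) * star U :=
        hT.1.spectral_theorem
      rw [Matrix.star_eq_conjTranspose] at hspec
      have hTT : T * T = U * Matrix.diagonal
          (fun i => ((lam i * lam i : ℝ) : ℂ)) * Uᴴ := by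
        conv_lhs => rw [hspec]
        rw [← Matrix.star_eq_conjTranspose]
        calc U * Matrix.diagonal (RCLike.ofReal ∘ lam) * star U
              * (U * Matrix.diagonal (RCLike.ofReal ∘ lam) * star U)
            = U * Matrix.diagonal (RCLike.ofReal ∘ lam) * (star U * U)
              * Matrix.diagonal (RCLike.ofReal ∘ lam) * star U := by
              noncomm_ring
          _ = U * (Matrix.diagonal (RCLike.ofReal ∘ lam)
              * Matrix.diagonal (RCLike.ofReal ∘ lam)) * star U := by
              rw [hUU']; noncomm_ring
          _ = _ := by
              rw [Matrix.diagonal_mul_diagonal, Matrix.star_eq_conjTranspose]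
              congr 1
              ext i
              simp
      have hcT : (c : ℂ) • T = U * Matrix.diagonal (fun i => ((c * lam i : ℝ) : ℂ)) * Uᴴ := by
        conv_lhs => rw [hspec]
        rw [show (c:ℂ) • (U * Matrix.diagonal (RCLike.ofReal ∘ lam) * Uᴴ)
            = U * ((c:ℂ) • Matrix.diagonal (RCLike.ofReal ∘ lam)) * Uᴴ by
          rw [Matrix.mul_smul, Matrix.smul_mul]]
        congr 2
        ext i k
        rcases eq_or_ne i k with h | h
        · subst h
          simp [Matrix.diagonal_apply_eq, Function.comp, Matrix.smul_apply, smul_eq_mul]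
        · simp [Matrix.diagonal_apply_ne _ h, h, Matrix.smul_apply]
      rw [hTT, hcT]
      rw [← Matrix.sub_mul, ← Matrix.mul_sub, Matrix.diagonal_sub]
      congr 1
      ext i
      push_cast
      ring
    rw [hdiag]
    refine Matrix.PosSemidef.mul_mul_conjTranspose_same ?_ U
    refine Matrix.PosSemidef.diagonal ?_
    intro i
    simp only [Pi.zero_apply]
    rw [Complex.zero_le_real]
    have h1 : lam i ≤ c := Finset.single_le_sum (fun j _ => hlam0 j) (Finset.mem_univ i)
    nlinarith [hlam0 i]
  intro v
  have h0 := hpsd.dotProduct_mulVec_nonneg v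
  have hexp : star v ⬝ᵥ (((c : ℂ) • T - T * T) *ᵥ v)
      = (c : ℂ) * (star v ⬝ᵥ (T *ᵥ v)) - star (T *ᵥ v) ⬝ᵥ (T *ᵥ v) := by
    rw [Matrix.sub_mulVec, dotProduct_sub, Matrix.smul_mulVec, dotProduct_smul,
      ← Matrix.mulVec_mulVec]
    have h2 : star (T *ᵥ v) ⬝ᵥ (T *ᵥ v) = star v ⬝ᵥ (T *ᵥ (T *ᵥ v)) := by
      rw [star_mulVec, hT.1.eq]
      exact (dotProduct_mulVec _ _ _).symm
    rw [h2, smul_eq_mul]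
  rw [hexp] at h0
  exact sub_nonneg.mp h0

lemma arith_key (ε t R Z C0 C1 Q0 c' K : ℝ)
    (hε0 : 0 ≤ ε) (ht : 0 ≤ t) (hR0 : 0 ≤ R) (hZ : 0 ≤ Z) (hC0 : 0 ≤ C0) (hC1 : 0 ≤ C1)
    (hQ0 : 0 ≤ Q0) (hc' : 1 ≤ c')
    (hK : K = 1 + C0 + C1 * c' + 2 * c' * Z ^ 2)
    (hR : R ^ 2 ≤ c' * Q0) (hε : ε ^ 2 * (4 * K) ≤ 1) :
    2 * (ε * t) * (R * Z) + ε ^ 2 * t ^ 2 * C0 + ε ^ 2 * C1 * R ^ 2 ≤ Q0 + t ^ 2 := by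
  have hc'0 : (0:ℝ) < c' := by linarith
  have hZ2 : 0 ≤ 2 * c' * Z ^ 2 := by positivity
  have hKC1 : C1 * c' ≤ K := by nlinarith
  have hKC0 : C0 + 2 * c' * Z ^ 2 ≤ K := by nlinarith
  have hε2 : 0 ≤ ε ^ 2 := sq_nonneg ε
  have h1 : 0 ≤ 1 - 4 * (ε ^ 2 * (C1 * c')) := by nlinarith
  have h2 : 0 ≤ 1 - 4 * (ε ^ 2 * (C0 + 2 * c' * Z ^ 2)) := by nlinarith
  have b2 : ε ^ 2 * C1 * R ^ 2 ≤ Q0 / 4 := by nlinarith [mul_nonneg hQ0 h1, mul_le_mul_of_nonneg_left hR (mul_nonneg hε2 hC1)]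
  have b3 : ε ^ 2 * t ^ 2 * C0 + 2 * c' * ε ^ 2 * t ^ 2 * Z ^ 2 ≤ t ^ 2 / 4 := by
    nlinarith [mul_nonneg (sq_nonneg t) h2]
  have b1 : (2 * c') * (2 * (ε * t) * (R * Z)) ≤ (2 * c') * (Q0 / 2 + 2 * c' * ε ^ 2 * t ^ 2 * Z ^ 2) := by
    nlinarith [sq_nonneg (R - 2 * c' * (ε * t * Z)), hR]
  have b4 : 2 * (ε * t) * (R * Z) ≤ Q0 / 2 + 2 * c' * ε ^ 2 * t ^ 2 * Z ^ 2 :=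
    le_of_mul_le_mul_left b1 (by linarith)
  linarith [b2, b3, b4, hQ0, sq_nonneg t]

/-- If `X` is in the matrix ball with `S = Σⱼ Xⱼ² ≠ I`, and there are vectors
`w₁,…,w_g`, not all zero, orthogonal to `V = ker(I - S)` with `Σⱼ Xⱼwⱼ` also orthogonal
to `V`, then `X` admits a nontrivial one-row dilation in the matrix ball, i.e. `X` is not
an Arveson extreme point of the matrix ball. -/
theorem matrix_ball_not_arveson_extreme (g n : ℕ)
    (X : Fin g → Matrix (Fin n) (Fin n) ℂ)
    (hX : ∀ j, (X j).IsHermitian)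
    (hball : (1 - ∑ j, X j ^ 2).PosSemidef)
    (hSne : ∑ j, X j ^ 2 ≠ 1)
    (w : Fin g → Fin n → ℂ) (hw : w ≠ 0)
    (hwW : ∀ j (v : Fin n → ℂ), (1 - ∑ j', X j' ^ 2) *ᵥ v = 0 → star v ⬝ᵥ w j = 0)
    (hXw : ∀ v : Fin n → ℂ, (1 - ∑ j', X j' ^ 2) *ᵥ v = 0 →
      star v ⬝ᵥ (∑ j, X j *ᵥ w j) = 0) :
    ∃ (a : Fin g → Fin n → ℂ) (b : Fin g → ℝ), a ≠ 0 ∧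
      (1 - ∑ j, (Matrix.fromBlocks (X j)
        (Matrix.of fun i _ => a j i) (Matrix.of fun _ i => star (a j i))
        (Matrix.of fun _ _ => (b j : ℂ)) : Matrix (Fin n ⊕ Unit) (Fin n ⊕ Unit) ℂ) ^ 2).PosSemidef := by
  classical
  set T : Matrix (Fin n) (Fin n) ℂ := 1 - ∑ j, X j ^ 2 with hTdef
  have hTH : T.IsHermitian := hball.isHermitian
  obtain ⟨z, hz⟩ := exists_mulVec_eq hTH _ hXw
  choose zw hzw using fun j => exists_mulVec_eq hTH (w j) (hwW j)
  obtain ⟨c, hc0, hc⟩ := exists_sq_le hball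
  set c' : ℝ := c + 1 with hc'def
  have hc'1 : 1 ≤ c' := by linarith
  have hc'0 : 0 < c' := by linarith
  set Z : ℝ := ‖toE z‖ with hZdef
  set C0 : ℝ := ∑ j, ‖toE (w j)‖ ^ 2 with hC0def
  set C1 : ℝ := ∑ j, ‖toE (zw j)‖ ^ 2 with hC1def
  have hC0n : 0 ≤ C0 := Finset.sum_nonneg fun _ _ => sq_nonneg _
  have hC1n : 0 ≤ C1 := Finset.sum_nonneg fun _ _ => sq_nonneg _
  set K : ℝ := 1 + C0 + C1 * c' + 2 * c' * Z ^ 2 with hKdef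
  have hK0 : 0 < K := by
    have h1 := mul_nonneg hC1n hc'0.le
    have h2 := mul_nonneg (by linarith : (0:ℝ) ≤ 2 * c') (sq_nonneg Z)
    linarith
  have h4K : (0:ℝ) < 4 * K := by linarith
  set ε : ℝ := min 1 (1 / (4 * K)) with hεdef
  have hε0 : 0 < ε := lt_min one_pos (div_pos one_pos h4K)
  have hε1 : ε ≤ 1 := min_le_left _ _
  have hεK : ε ^ 2 * (4 * K) ≤ 1 := by
    have h1 : ε ≤ 1 / (4 * K) := min_le_right _ _
    have h2 : ε ^ 2 ≤ ε := by nlinarith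
    calc ε ^ 2 * (4 * K) ≤ (1 / (4 * K)) * (4 * K) :=
          mul_le_mul_of_nonneg_right (le_trans h2 h1) h4K.le
      _ = 1 := one_div_mul_cancel h4K.ne'
  refine ⟨fun j i => (ε : ℂ) * w j i, 0, ?_, ?_⟩
  · intro hcon
    apply hw
    funext j i
    have h := congrFun (congrFun hcon j) i
    simp only [Pi.zero_apply] at h ⊢
    have hεne : (ε : ℂ) ≠ 0 := by exact_mod_cast hε0.ne'
    exact (mul_eq_zero.mp h).resolve_left hεne
  · simp only [Pi.zero_apply, Complex.ofReal_zero]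
    set Y : Fin g → Matrix (Fin n ⊕ Unit) (Fin n ⊕ Unit) ℂ := fun j =>
      Matrix.fromBlocks (X j) (Matrix.of fun i _ => (ε : ℂ) * w j i)
        (Matrix.of fun _ i => star ((ε : ℂ) * w j i)) (Matrix.of fun _ _ => (0 : ℂ)) with hYdef
    have hYH : ∀ j, (Y j).IsHermitian := by
      intro j
      refine Matrix.IsHermitian.fromBlocks (hX j) ?_ ?_
      · ext u i
        simp [Matrix.conjTranspose_apply]
      · ext u u'
        simp [Matrix.IsHermitian]
    have hsumH : (∑ j, Y j ^ 2).IsHermitian := by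
      rw [Matrix.IsHermitian, Matrix.conjTranspose_sum]
      exact Finset.sum_congr rfl fun j _ => (hYH j).pow 2
    refine Matrix.PosSemidef.of_dotProduct_mulVec_nonneg (Matrix.IsHermitian.sub Matrix.isHermitian_one hsumH) ?_
    intro x
    set v : Fin n → ℂ := fun i => x (Sum.inl i) with hvdef
    set t : ℂ := x (Sum.inr ()) with htdef
    set τ : ℂ := (ε : ℂ) * t with hτdef
    have hεnorm : ‖(ε : ℂ)‖ = ε := by
      rw [Complex.norm_real, Real.norm_eq_abs, abs_of_nonneg hε0.le]
    have hτnorm : ‖τ‖ = ε * ‖t‖ := by rw [hτdef, norm_mul, hεnorm]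
    have hYx : ∀ j, Y j *ᵥ x = Sum.elim (X j *ᵥ v + τ • w j)
        (fun _ => (ε : ℂ) * (star (w j) ⬝ᵥ v)) := by
      intro j
      funext s
      rcases s with i | u
      · show (Y j *ᵥ x) (Sum.inl i) = _
        simp only [hYdef, Matrix.mulVec, dotProduct, Fintype.sum_sum_type,
          Matrix.fromBlocks_apply₁₁, Matrix.fromBlocks_apply₁₂, Matrix.of_apply, Sum.elim_inl,
          Pi.add_apply, Pi.smul_apply, smul_eq_mul, Fintype.sum_unique]
        rw [hτdef, hvdef, htdef]
        ring_nf
      · cases u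
        show (Y j *ᵥ x) (Sum.inr ()) = _
        simp only [hYdef, Matrix.mulVec, dotProduct, Fintype.sum_sum_type,
          Matrix.fromBlocks_apply₂₁, Matrix.fromBlocks_apply₂₂, Matrix.of_apply, Sum.elim_inr,
          Fintype.sum_unique, zero_mul, add_zero, Pi.star_apply, star_mul',
          Complex.star_def, Complex.conj_ofReal, Finset.mul_sum]
        exact Finset.sum_congr rfl fun k _ => by ring
    have hterm : ∀ j, star (Y j *ᵥ x) ⬝ᵥ (Y j *ᵥ x)
        = ((‖toE (X j *ᵥ v + τ • w j)‖ ^ 2 + ‖(ε : ℂ) * (star (w j) ⬝ᵥ v)‖ ^ 2 : ℝ) : ℂ) := by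
      intro j
      rw [hYx j]
      rw [show star (Sum.elim (X j *ᵥ v + τ • w j) (fun _ : Unit => (ε : ℂ) * (star (w j) ⬝ᵥ v)))
          = Sum.elim (star (X j *ᵥ v + τ • w j))
            (star (fun _ : Unit => (ε : ℂ) * (star (w j) ⬝ᵥ v))) from by
        funext s; rcases s with i | u <;> rfl]
      rw [sumElim_dotProduct_sumElim, star_dot_self_eq, star_dot_self_eq,
        show ‖toE (fun _ : Unit => (ε : ℂ) * (star (w j) ⬝ᵥ v))‖
          = ‖(ε : ℂ) * (star (w j) ⬝ᵥ v)‖ from toE_unit_norm _]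
      push_cast
      ring
    have hxsplit : star x ⬝ᵥ x = ((‖toE v‖ ^ 2 + ‖t‖ ^ 2 : ℝ) : ℂ) := by
      have hxe : x = Sum.elim v (fun _ : Unit => t) := by
        funext s
        rcases s with i | u
        · rfl
        · cases u; rfl
      conv_lhs => rw [hxe]
      rw [show star (Sum.elim v (fun _ : Unit => t))
          = Sum.elim (star v) (star (fun _ : Unit => t)) from by
        funext s; rcases s with i | u <;> rfl]
      rw [sumElim_dotProduct_sumElim, star_dot_self_eq, star_dot_self_eq,
        show ‖toE (fun _ : Unit => t)‖ = ‖t‖ from toE_unit_norm _]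
      push_cast
      ring
    have hQ : star x ⬝ᵥ ((1 - ∑ j, Y j ^ 2) *ᵥ x)
        = ((‖toE v‖ ^ 2 + ‖t‖ ^ 2 - ∑ j, (‖toE (X j *ᵥ v + τ • w j)‖ ^ 2
            + ‖(ε : ℂ) * (star (w j) ⬝ᵥ v)‖ ^ 2) : ℝ) : ℂ) := by
      rw [Matrix.sub_mulVec, Matrix.one_mulVec, dotProduct_sub, sum_mulVec', dotProduct_sum',
        hxsplit]
      rw [Finset.sum_congr rfl (fun j (_ : j ∈ Finset.univ) => by
        rw [pow_two, ← Matrix.mulVec_mulVec, ← herm_shift (hYH j), hterm j])]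
      push_cast
      ring
    rw [hQ, Complex.zero_le_real]
    set Q0 : ℝ := ‖toE v‖ ^ 2 - ∑ j, ‖toE (X j *ᵥ v)‖ ^ 2 with hQ0def
    set R : ℝ := ‖toE (T *ᵥ v)‖ with hRdef
    have hq : star v ⬝ᵥ (T *ᵥ v) = ((Q0 : ℝ) : ℂ) := by
      rw [hTdef, Matrix.sub_mulVec, Matrix.one_mulVec, dotProduct_sub, sum_mulVec',
        dotProduct_sum', star_dot_self_eq]
      rw [Finset.sum_congr rfl (fun j (_ : j ∈ Finset.univ) => by
        rw [pow_two, ← Matrix.mulVec_mulVec, ← herm_shift (hX j), star_dot_self_eq])]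
      rw [hQ0def]
      push_cast
      ring
    have hQ0n : 0 ≤ Q0 := by
      have h := hball.dotProduct_mulVec_nonneg v
      rw [hq] at h
      exact Complex.zero_le_real.mp h
    have hR2 : R ^ 2 ≤ c' * Q0 := by
      have h := hc v
      rw [star_dot_self_eq, hq] at h
      have h' : (‖toE (T *ᵥ v)‖ ^ 2 : ℝ) ≤ c * Q0 := by exact_mod_cast h
      nlinarith [hQ0n]
    have hIP : ∑ j, star (X j *ᵥ v) ⬝ᵥ w j = star (T *ᵥ v) ⬝ᵥ z := by
      rw [Finset.sum_congr rfl (fun j (_ : j ∈ Finset.univ) => herm_shift (hX j) v (w j)),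
        ← dotProduct_sum', ← hz]
      exact (herm_shift hTH v z).symm
    have hexp : ∀ j, ‖toE (X j *ᵥ v + τ • w j)‖ ^ 2
        = ‖toE (X j *ᵥ v)‖ ^ 2 + 2 * (τ * (star (X j *ᵥ v) ⬝ᵥ w j)).re
          + ε ^ 2 * ‖t‖ ^ 2 * ‖toE (w j)‖ ^ 2 := by
      intro j
      rw [toE_add, toE_smul, expand_sq, ← dot_eq_inner, hτnorm]
      ring
    have hsj : ∀ j, ‖(ε : ℂ) * (star (w j) ⬝ᵥ v)‖ ^ 2 ≤ ε ^ 2 * (‖toE (zw j)‖ ^ 2 * R ^ 2) := by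
      intro j
      have h1 : star (w j) ⬝ᵥ v = star (zw j) ⬝ᵥ (T *ᵥ v) := by
        conv_lhs => rw [← hzw j]
        exact herm_shift hTH (zw j) v
      rw [h1, norm_mul, hεnorm, mul_pow]
      have h2 : ‖star (zw j) ⬝ᵥ (T *ᵥ v)‖ ≤ ‖toE (zw j)‖ * R := norm_dot_le _ _
      have h4 : ‖star (zw j) ⬝ᵥ (T *ᵥ v)‖ ^ 2 ≤ (‖toE (zw j)‖ * R) ^ 2 :=
        pow_le_pow_left₀ (norm_nonneg _) h2 2
      calc ε ^ 2 * ‖star (zw j) ⬝ᵥ (T *ᵥ v)‖ ^ 2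
          ≤ ε ^ 2 * (‖toE (zw j)‖ * R) ^ 2 := mul_le_mul_of_nonneg_left h4 (sq_nonneg ε)
        _ = ε ^ 2 * (‖toE (zw j)‖ ^ 2 * R ^ 2) := by ring
    have hcross : (τ * (star (T *ᵥ v) ⬝ᵥ z)).re ≤ ε * ‖t‖ * (R * Z) := by
      calc (τ * (star (T *ᵥ v) ⬝ᵥ z)).re ≤ ‖τ * (star (T *ᵥ v) ⬝ᵥ z)‖ := by
            exact Complex.re_le_norm _
        _ = ‖τ‖ * ‖star (T *ᵥ v) ⬝ᵥ z‖ := norm_mul _ _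
        _ ≤ ε * ‖t‖ * (R * Z) := by
            rw [hτnorm]
            exact mul_le_mul_of_nonneg_left (norm_dot_le _ _)
              (mul_nonneg hε0.le (norm_nonneg t))
    have hssum : ∑ j, ‖(ε : ℂ) * (star (w j) ⬝ᵥ v)‖ ^ 2 ≤ ε ^ 2 * C1 * R ^ 2 := by
      calc ∑ j, ‖(ε : ℂ) * (star (w j) ⬝ᵥ v)‖ ^ 2
          ≤ ∑ j, ε ^ 2 * (‖toE (zw j)‖ ^ 2 * R ^ 2) := Finset.sum_le_sum fun j _ => hsj j
        _ = ε ^ 2 * C1 * R ^ 2 := by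
            rw [hC1def, Finset.mul_sum, Finset.sum_mul]
            exact Finset.sum_congr rfl fun j _ => by ring
    have hsum_exp : ∑ j, (‖toE (X j *ᵥ v + τ • w j)‖ ^ 2 + ‖(ε : ℂ) * (star (w j) ⬝ᵥ v)‖ ^ 2)
        = (∑ j, ‖toE (X j *ᵥ v)‖ ^ 2) + 2 * (τ * (star (T *ᵥ v) ⬝ᵥ z)).re
          + ε ^ 2 * ‖t‖ ^ 2 * C0 + ∑ j, ‖(ε : ℂ) * (star (w j) ⬝ᵥ v)‖ ^ 2 := by
      rw [Finset.sum_add_distrib]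
      congr 1
      rw [Finset.sum_congr rfl (fun j (_ : j ∈ Finset.univ) => hexp j)]
      rw [Finset.sum_add_distrib, Finset.sum_add_distrib]
      congr 1
      · congr 1
        rw [← Finset.mul_sum, ← Complex.re_sum, ← Finset.mul_sum, hIP]
      · rw [hC0def, ← Finset.mul_sum]
    have harith := arith_key ε ‖t‖ R Z C0 C1 Q0 c' K hε0.le (norm_nonneg t) (norm_nonneg _)
      (norm_nonneg _) hC0n hC1n hQ0n hc'1 hKdef hR2 hεK
    rw [hsum_exp]
    linarith [harith, hcross, hssum]
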